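/- Let E be a real inner product space, P ⊆ E a nonempty set of Euclidean diameter at most D, and Q : E → ℝ convex and differentiable satisfying the smoothness inequality Q(b) ≤ Q(a) + ⟨∇Q(a), b − a⟩ + (β̃/2)‖b − a‖² for all a, b ∈ P. Let x̄ ∈ P and let y₁ ∈ P minimize w ↦ ⟨w, ∇Q(x̄)⟩ over P. Then for every u ∈ P: Q(y₁) − Q(u) ≤ β̃·D²/2. -/

import Mathlib

open RealInnerProductSpace

lemma grad_ineq {E : Type*} [NormedAddCommGroup E] [InnerProductSpace ℝ E]
    (Q : E → ℝ) (hQconv : ConvexOn ℝ Set.univ Q) (hQdiff : Differentiable ℝ Q)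
    (x u : E) : Q x + fderiv ℝ Q x (u - x) ≤ Q u := by
  set v := u - x with hv
  set g : ℝ → ℝ := fun t => Q (x + t • v) with hg
  have hgconv : ConvexOn ℝ Set.univ g := by
    have := hQconv.comp_affineMap
      (AffineMap.mk (fun t : ℝ => x + t • v)
        (LinearMap.toAffineMap (LinearMap.smulRight (LinearMap.id) v)).linear
        (by intro p w; simp [add_smul]; abel))
    simpa [g, Set.preimage_univ, Function.comp_def] using this
  have hderiv : HasDerivAt g (fderiv ℝ Q x v) 0 := by
    have h1 : HasDerivAt (fun t : ℝ => x + t • v) v 0 := by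
      simpa using ((hasDerivAt_id (0:ℝ)).smul_const v).const_add x
    have h2 : HasFDerivAt Q (fderiv ℝ Q x) (x + (0:ℝ) • v) := by
      simpa using (hQdiff x).hasFDerivAt
    simpa [Function.comp_def] using h2.comp_hasDerivAt 0 h1
  have := hgconv.le_slope_of_hasDerivAt (Set.mem_univ (0:ℝ)) (Set.mem_univ (1:ℝ))
    (by norm_num) hderiv
  have h01 : slope g 0 1 = Q u - Q x := by
    simp [slope, g, hv]
  rw [h01] at this
  linarith

theorem stmt_19
    {E : Type*} [NormedAddCommGroup E] [InnerProductSpace ℝ E]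
    (P : Set E) (hPne : P.Nonempty)
    (D βt : ℝ) (hβt : 0 < βt)
    (hD : ∀ a ∈ P, ∀ c ∈ P, ‖a - c‖ ≤ D)
    (Q : E → ℝ)
    (hQconv : ConvexOn ℝ Set.univ Q) (hQdiff : Differentiable ℝ Q)
    (hsmooth : ∀ a ∈ P, ∀ c ∈ P,
      Q c ≤ Q a + fderiv ℝ Q a (c - a) + (βt / 2) * ‖c - a‖ ^ 2)
    (xb : E) (hxb : xb ∈ P)
    (y1 : E) (hy1P : y1 ∈ P)
    (hy1 : ∀ w ∈ P, fderiv ℝ Q xb y1 ≤ fderiv ℝ Q xb w) :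
    ∀ u ∈ P, Q y1 - Q u ≤ βt * D ^ 2 / 2 := by
  intro u hu
  have hD0 : 0 ≤ D := le_trans (by simp) (hD xb hxb xb hxb)
  have hnorm : ‖y1 - xb‖ ≤ D := hD y1 hy1P xb hxb
  have hsq : ‖y1 - xb‖ ^ 2 ≤ D ^ 2 := pow_le_pow_left₀ (norm_nonneg _) hnorm 2
  have h1 := hsmooth xb hxb y1 hy1P
  have h2 : fderiv ℝ Q xb (y1 - xb) ≤ fderiv ℝ Q xb (u - xb) := by
    rw [map_sub, map_sub]
    exact sub_le_sub_right (hy1 u hu) _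
  have h3 := grad_ineq Q hQconv hQdiff xb u
  nlinarith [hsq, hβt.le]
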